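/- arXiv:2403.09091 — 5 statements merged into one kernel-verified Lean document; each statement's English description precedes it below -/
import Mathlib

section
/- Let n ≥ 3 and let B ⊆ SL_n(ℂ) be the subgroup of upper triangular matrices of determinant 1. Under the action A·(v,w) = (A v, (Aᵀ)⁻¹ w) of SL_n(ℂ) on ℂⁿ × ℂⁿ, the B-orbit of the point (e₁ + e_n, e₁) is exactly the set {(v,w) ∈ ℂⁿ × ℂⁿ : ∑_{i=1}^n v_i w_i = 1 and v_n · w₁ ≠ 0}. -/
open Matrix

/-- For `n ≥ 3` and `B ⊆ SL_n(ℂ)` the subgroup of upper triangular matrices,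
under the action `A · (v, w) = (A v, (Aᵀ)⁻¹ w)`, the `B`-orbit of `(e₁ + e_n, e₁)` is exactly
`{(v, w) : ∑ i, v i * w i = 1 ∧ v_n * w₁ ≠ 0}`. -/
theorem stmt1 (n : ℕ) (hn : 3 ≤ n) :
    {p : (Fin n → ℂ) × (Fin n → ℂ) |
      ∃ A : Matrix.SpecialLinearGroup (Fin n) ℂ,
        (∀ i j : Fin n, j < i → A.val i j = 0) ∧
        p.1 = A.val.mulVec
          (Pi.single (⟨0, by omega⟩ : Fin n) 1 + Pi.single (⟨n - 1, by omega⟩ : Fin n) 1) ∧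
        p.2 = (A.val.transpose)⁻¹.mulVec (Pi.single (⟨0, by omega⟩ : Fin n) 1)} =
    {p : (Fin n → ℂ) × (Fin n → ℂ) |
      (∑ i, p.1 i * p.2 i = 1) ∧ p.1 ⟨n - 1, by omega⟩ * p.2 ⟨0, by omega⟩ ≠ 0} := by
  have h0 : (0:ℕ) < n := by omega
  have h1 : (1:ℕ) < n := by omega
  have hl : n - 1 < n := by omega
  set z0 : Fin n := ⟨0, h0⟩ with hz0
  set z1 : Fin n := ⟨1, h1⟩ with hz1
  set zl : Fin n := ⟨n-1, hl⟩ with hzl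
  have hz0l : z0 ≠ zl := by simp [hz0, hzl, Fin.ext_iff]; omega
  have hz01 : z0 ≠ z1 := by simp [hz0, hz1, Fin.ext_iff]
  have hz1l : z1 ≠ zl := by simp [hz1, hzl, Fin.ext_iff]; omega
  have hlt0l : z0 < zl := by rw [Fin.lt_def]; simp [hz0, hzl]; omega
  have hz0lt : ∀ j : Fin n, j ≠ z0 → z0 < j := by
    intro j hj
    rw [Fin.lt_def]
    rcases j with ⟨jv, hjv⟩
    simp [hz0, Fin.ext_iff] at hj ⊢
    omega
  ext ⟨v, w⟩
  simp only [Set.mem_setOf_eq]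
  constructor
  · rintro ⟨A, htri, hv, hw⟩
    have hdet : A.val.det = 1 := A.property
    have hbt : A.val.BlockTriangular id := fun i j h => htri i j h
    have hprod : ∏ i, A.val i i = 1 := by
      rw [← Matrix.det_of_upperTriangular hbt]; exact hdet
    have hprodne : (∏ i, A.val i i) ≠ 0 := by rw [hprod]; exact one_ne_zero
    have hdiag : ∀ i, A.val i i ≠ 0 := fun i =>
      Finset.prod_ne_zero_iff.mp hprodne i (Finset.mem_univ i)
    have hunit : IsUnit (A.val)ᵀ.det := by
      rw [Matrix.det_transpose, hdet]; exact isUnit_one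
    have hATw : (A.val)ᵀ *ᵥ w = Pi.single z0 1 := by
      rw [hw, Matrix.mulVec_mulVec, Matrix.mul_nonsing_inv _ hunit, Matrix.one_mulVec]
    have hsum : ∑ i, v i * w i = 1 := by
      have h1 : ∑ i, v i * w i = v ⬝ᵥ w := rfl
      rw [h1, hv, ← Matrix.vecMul_transpose, ← Matrix.dotProduct_mulVec, hATw]
      simp [dotProduct, Pi.single_apply, Finset.sum_ite_eq', Ne.symm hz0l, hz0l]
    have hvzl : v zl = A.val zl zl := by
      rw [hv, Matrix.mulVec_add, Matrix.mulVec_single, Matrix.mulVec_single]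
      simp [htri zl z0 hlt0l]
    have hwz0 : A.val z0 z0 * w z0 = 1 := by
      have h2 : ((A.val)ᵀ *ᵥ w) z0 = (Pi.single z0 1 : Fin n → ℂ) z0 := by rw [hATw]
      simp only [Matrix.mulVec, dotProduct, Matrix.transpose_apply,
        Pi.single_eq_same] at h2
      rw [Finset.sum_eq_single z0 (fun j _ hj => by
        rw [htri j z0 (hz0lt j hj), zero_mul]) (by simp)] at h2
      exact h2
    have hwz0' : w z0 ≠ 0 := by
      intro h
      rw [h, mul_zero] at hwz0
      exact zero_ne_one hwz0
    refine ⟨hsum, ?_⟩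
    show v zl * w z0 ≠ 0
    rw [hvzl]
    exact mul_ne_zero (hdiag zl) hwz0'
  · rintro ⟨hsum, hne⟩
    have hsum : ∑ i, v i * w i = 1 := hsum
    have hne' : v zl * w z0 ≠ 0 := hne
    have hvzl : v zl ≠ 0 := (mul_ne_zero_iff.mp hne').1
    have hwz0 : w z0 ≠ 0 := (mul_ne_zero_iff.mp hne').2
    set M : Matrix (Fin n) (Fin n) ℂ := fun i j =>
      if i = j then
        (if i = z0 then (w z0)⁻¹ else if i = z1 then w z0 / v zl
          else if i = zl then v zl else 1)
      else if i = z0 then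
        (if j = zl then v z0 - (w z0)⁻¹ else if j = z1 then -(w z1) / v zl
          else -(w j) / (w z0))
      else if j = zl then v i else 0 with hM
    -- upper triangularity
    have htriM : ∀ i j : Fin n, j < i → M i j = 0 := by
      intro i j hij
      have h1 : ¬(i = j) := fun h => absurd hij (by rw [h]; exact lt_irrefl j)
      have h2 : ¬(i = z0) := by
        intro h
        rw [h, Fin.lt_def] at hij
        simp [hz0] at hij
      have h3 : ¬(j = zl) := by
        intro h
        rw [h, Fin.lt_def] at hij
        have := i.isLt
        simp [hzl] at hij
        omega
      simp [hM, h1, h2, h3]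
    have hbt : M.BlockTriangular id := fun i j h => htriM i j h
    -- column facts
    have hcol0 : ∀ i, M i z0 = if i = z0 then (w z0)⁻¹ else 0 := by
      intro i
      by_cases h : i = z0
      · simp [hM, h]
      · simp [hM, h, hz0l]
    have hcoll : ∀ i, M i zl = if i = z0 then v z0 - (w z0)⁻¹ else v i := by
      intro i
      by_cases h : i = z0
      · subst h; simp [hM, hz0l]
      · by_cases h2 : i = zl
        · subst h2; simp [hM, h, Ne.symm hz1l]
        · simp [hM, h, h2]
    have hcolmid : ∀ j : Fin n, j ≠ z0 → j ≠ zl → ∀ i, M i j =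
        (if i = z0 then M z0 j else 0) + (if i = j then M j j else 0) := by
      intro j hj0 hjl i
      by_cases h : i = z0
      · subst h
        simp [Ne.symm hj0]
      · by_cases h2 : i = j
        · subst h2; simp [h]
        · simp [hM, h, h2, hjl]
    -- determinant
    have hdiagform : ∀ i, M i i = if i = z0 then (w z0)⁻¹ else if i = z1 then w z0 / v zl
        else if i = zl then v zl else 1 := by
      intro i; simp [hM]
    have hdetM : M.det = 1 := by
      rw [Matrix.det_of_upperTriangular hbt]
      have h5 : ∏ i ∈ ({z0, z1, zl} : Finset (Fin n)), M i i = ∏ i, M i i := by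
        refine Finset.prod_subset (Finset.subset_univ _) ?_
        intro x _ hx
        simp only [Finset.mem_insert, Finset.mem_singleton, not_or] at hx
        simp [hdiagform x, hx.1, hx.2.1, hx.2.2]
      rw [← h5, Finset.prod_insert (by simp [hz01, hz0l]),
        Finset.prod_insert (by simp [hz1l]), Finset.prod_singleton,
        hdiagform, hdiagform, hdiagform]
      simp only [if_pos rfl, if_neg (Ne.symm hz01), if_neg (Ne.symm hz0l),
        if_neg (Ne.symm hz1l), if_neg hz1l]
      field_simp
      simp only [↓reduceIte]
      field_simp
    -- M maps e1 + en to v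
    have hMv : M *ᵥ (Pi.single z0 1 + Pi.single zl 1) = v := by
      rw [Matrix.mulVec_add, Matrix.mulVec_single, Matrix.mulVec_single]
      funext i
      simp only [Pi.add_apply, Pi.smul_apply, op_smul_eq_mul, Matrix.col_apply, mul_one]
      rw [hcol0 i, hcoll i]
      by_cases h : i = z0
      · subst h; simp
      · simp [h]
    -- transpose M maps w to e1
    have hMTw : Mᵀ *ᵥ w = Pi.single z0 1 := by
      funext j
      have hentry : (Mᵀ *ᵥ w) j = ∑ i, M i j * w i := by
        simp [Matrix.mulVec, dotProduct, Matrix.transpose_apply]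
      rw [hentry]
      by_cases hj0 : j = z0
      · subst hj0
        rw [Finset.sum_congr rfl (fun i _ => by rw [hcol0 i])]
        simp [ite_mul, Finset.sum_ite_eq', inv_mul_cancel₀ hwz0]
      · by_cases hjl : j = zl
        · subst hjl
          rw [Finset.sum_congr rfl (fun i _ => by rw [hcoll i])]
          have hstep : ∀ i, (if i = z0 then v z0 - (w z0)⁻¹ else v i) * w i
              = v i * w i - (if i = z0 then (w z0)⁻¹ * w i else 0) := by
            intro i
            split_ifs with h
            · subst h; ring
            · ring
          rw [Finset.sum_congr rfl (fun i _ => hstep i), Finset.sum_sub_distrib, hsum,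
            Finset.sum_ite_eq']
          simp [inv_mul_cancel₀ hwz0, Pi.single_eq_of_ne (Ne.symm hz0l)]
        · rw [Finset.sum_congr rfl (fun i _ => by rw [hcolmid j hj0 hjl i])]
          have hdist : ∀ i, ((if i = z0 then M z0 j else 0) + (if i = j then M j j else 0)) * w i
              = (if i = z0 then M z0 j * w i else 0) + (if i = j then M j j * w i else 0) := by
            intro i; simp [add_mul, ite_mul, zero_mul]
          rw [Finset.sum_congr rfl (fun i _ => hdist i), Finset.sum_add_distrib,
            Finset.sum_ite_eq', Finset.sum_ite_eq']
          simp only [Finset.mem_univ, if_true]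
          rw [Pi.single_eq_of_ne hj0]
          by_cases hj1 : j = z1
          · subst hj1
            have e1 : M z0 z1 = -(w z1) / v zl := by
              simp [hM, hz01, hz1l]
            have e2 : M z1 z1 = w z0 / v zl := by
              simp [hM, Ne.symm hz01]
            rw [e1, e2]
            ring
          · have e1 : M z0 j = -(w j) / (w z0) := by
              simp [hM, Ne.symm hj0, hjl, hj1]
            have e2 : M j j = 1 := by
              simp [hM, hj0, hj1, hjl]
            rw [e1, e2, one_mul]
            field_simp
            ring
    have hunit : IsUnit (Mᵀ).det := by
      rw [Matrix.det_transpose, hdetM]; exact isUnit_one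
    have hinv : (Mᵀ)⁻¹ *ᵥ Pi.single z0 1 = w := by
      rw [← hMTw, Matrix.mulVec_mulVec, Matrix.nonsing_inv_mul _ hunit, Matrix.one_mulVec]
    exact ⟨⟨M, hdetM⟩, htriM, hMv.symm, hinv.symm⟩
end

section
/- Let n ≥ 3 and let 0 < t < 1. Then the image of the set X = {(v,w) ∈ ℂⁿ × ℂⁿ : ∑_{i=1}^n v_i w_i = 1} under the map (v,w) ↦ ( log_t(∑_{i=1}^n |v_i|²), log_t(∑_{i=1}^n |w_i|²) ) is exactly the closed half-plane {(a,b) ∈ ℝ² : a + b ≤ 0}. -/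
/-- For `n ≥ 3` and `0 < t < 1`, the image of
`X = {(v, w) ∈ ℂⁿ × ℂⁿ : ∑ vᵢ wᵢ = 1}` under the spherical logarithm map
`(v, w) ↦ (log_t ∑ |vᵢ|², log_t ∑ |wᵢ|²)` is exactly the half-plane `{(a, b) : a + b ≤ 0}`. -/
theorem stmt7 (n : ℕ) (hn : 3 ≤ n) (t : ℝ) (ht0 : 0 < t) (ht1 : t < 1) :
    (fun p : (Fin n → ℂ) × (Fin n → ℂ) =>
        ((Real.logb t (∑ i, ‖p.1 i‖ ^ 2),
          Real.logb t (∑ i, ‖p.2 i‖ ^ 2)) : ℝ × ℝ)) ''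
      {p : (Fin n → ℂ) × (Fin n → ℂ) | ∑ i, p.1 i * p.2 i = 1} =
    {q : ℝ × ℝ | q.1 + q.2 ≤ 0} := by
  have hlt : Real.log t < 0 := Real.log_neg ht0 ht1
  have hlne : Real.log t ≠ 0 := ne_of_lt hlt
  have hlogb : ∀ x : ℝ, Real.logb t (t ^ x) = x := fun x => by
    rw [Real.logb, Real.log_rpow ht0, mul_div_assoc, div_self hlne, mul_one]
  ext q
  constructor
  · rintro ⟨⟨v, w⟩, hp, rfl⟩
    simp only [Set.mem_setOf_eq] at hp ⊢
    set Sv := ∑ i, ‖v i‖ ^ 2 with hSvdef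
    set Sw := ∑ i, ‖w i‖ ^ 2 with hSwdef
    have hSv0 : 0 ≤ Sv := Finset.sum_nonneg fun i _ => sq_nonneg _
    have hSw0 : 0 ≤ Sw := Finset.sum_nonneg fun i _ => sq_nonneg _
    have h1 : (1:ℝ) ≤ Sv * Sw := by
      have h2 : (1:ℝ) ≤ ∑ i, ‖v i‖ * ‖w i‖ := by
        calc (1:ℝ) = ‖∑ i, v i * w i‖ := by rw [hp]; simp
        _ ≤ ∑ i, ‖v i * w i‖ := norm_sum_le _ _
        _ = ∑ i, ‖v i‖ * ‖w i‖ := by simp [map_mul]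
      calc (1:ℝ) ≤ (∑ i, ‖v i‖ * ‖w i‖)^2 := by nlinarith
      _ ≤ Sv * Sw := Finset.sum_mul_sq_le_sq_mul_sq _ _ _
    have hSvne : Sv ≠ 0 := by intro h; rw [h, zero_mul] at h1; linarith
    have hSwne : Sw ≠ 0 := by intro h; rw [h, mul_zero] at h1; linarith
    rw [← Real.logb_mul hSvne hSwne, Real.logb]
    exact div_nonpos_of_nonneg_of_nonpos (Real.log_nonneg h1) hlt.le
  · rintro hq
    obtain ⟨a, b⟩ := q
    simp only [Set.mem_setOf_eq] at hq
    set A := t ^ a with hAdef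
    set B := t ^ b with hBdef
    have hA : 0 < A := Real.rpow_pos_of_pos ht0 a
    have hB : 0 < B := Real.rpow_pos_of_pos ht0 b
    have hAB : 1 ≤ A * B := by
      have h := Real.rpow_le_rpow_of_exponent_ge ht0 (le_of_lt ht1) hq
      rwa [Real.rpow_zero, Real.rpow_add ht0] at h
    have hBA : A⁻¹ ≤ B := by
      rw [inv_eq_one_div, div_le_iff₀ hA]
      nlinarith
    have hi01 : n > 1 := by omega
    set i0 : Fin n := ⟨0, by omega⟩ with hi0def
    set i1 : Fin n := ⟨1, by omega⟩ with hi1def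
    have hne01 : i0 ≠ i1 := by simp [hi0def, hi1def, Fin.ext_iff]
    have hsA : Real.sqrt A ≠ 0 := ne_of_gt (Real.sqrt_pos.mpr hA)
    set v : Fin n → ℂ := fun i => if i = i0 then ((Real.sqrt A : ℝ) : ℂ) else 0 with hvdef
    set w : Fin n → ℂ := fun i => if i = i0 then (((Real.sqrt A)⁻¹ : ℝ) : ℂ)
      else if i = i1 then ((Real.sqrt (B - A⁻¹) : ℝ) : ℂ) else 0 with hwdef
    refine ⟨⟨v, w⟩, ?_, ?_⟩
    · simp only [Set.mem_setOf_eq]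
      have : ∀ i, v i * w i = if i = i0 then (1:ℂ) else 0 := by
        intro i
        by_cases h : i = i0
        · simp only [hvdef, hwdef, h, if_pos rfl, if_true, Complex.ofReal_inv]
          exact mul_inv_cancel₀ (Complex.ofReal_ne_zero.mpr hsA)
        · simp [hvdef, h]
      rw [Finset.sum_congr rfl fun i _ => this i, Finset.sum_ite_eq']
      simp
    · simp only
      have hv : ∑ i, ‖v i‖ ^ 2 = A := by
        have : ∀ i, ‖v i‖ ^ 2 = if i = i0 then A else 0 := by
          intro i
          by_cases h : i = i0
          · simp [hvdef, h, Complex.norm_real, abs_of_nonneg (Real.sqrt_nonneg _),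
              Real.sq_sqrt hA.le]
          · simp [hvdef, h]
        rw [Finset.sum_congr rfl fun i _ => this i, Finset.sum_ite_eq']
        simp
      have hw : ∑ i, ‖w i‖ ^ 2 = B := by
        have : ∀ i, ‖w i‖ ^ 2 =
            (if i = i0 then A⁻¹ else 0) + (if i = i1 then B - A⁻¹ else 0) := by
          intro i
          by_cases h : i = i0
          · have h01 : ¬ (i0 = i1) := hne01
            simp [hwdef, h, h01, Complex.norm_real, abs_of_nonneg (inv_nonneg.mpr (Real.sqrt_nonneg _)),
              ← Real.sqrt_inv, Real.sq_sqrt (inv_nonneg.mpr hA.le)]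
          · by_cases h1 : i = i1
            · have h10 : ¬ (i1 = i0) := hne01.symm
              simp [hwdef, h, h1, h10, Complex.norm_real, abs_of_nonneg (Real.sqrt_nonneg _),
                Real.sq_sqrt (by linarith : (0:ℝ) ≤ B - A⁻¹)]
            · simp [hwdef, h, h1]
        rw [Finset.sum_congr rfl fun i _ => this i, Finset.sum_add_distrib,
          Finset.sum_ite_eq', Finset.sum_ite_eq']
        simp
      rw [hv, hw, hlogb, hlogb]
end

section
/- Let 0 < t < 1. For A, B ∈ SL₂(ℂ) set Φ(A,B) = (1/2) ∑_{i,j ∈ {1,2}} |A_{i1}B_{j2} − A_{i2}B_{j1}|². Then the image of the map SL₂(ℂ)³ → ℝ³ sending (A,B,C) to ( log_t Φ(A,B), log_t Φ(A,C), log_t Φ(B,C) ) is exactly the set { ( log_t x, log_t y, log_t z ) : x ≥ 1, y ≥ 1, z ≥ 1, and 1 + 2xyz − x² − y² − z² ≥ 0 }. -/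
/-- The spherical function `φ_{Ω₁₂}` of `(SL₂(ℂ))³/SL₂(ℂ)_diag` evaluated at `(A, B, ·)`:
`Φ(A,B) = (1/2) ∑_{i,j} |A_{i1} B_{j2} − A_{i2} B_{j1}|²`. -/
noncomputable def sphPhi (A B : Matrix.SpecialLinearGroup (Fin 2) ℂ) : ℝ :=
  (1 / 2 : ℝ) * ∑ i : Fin 2, ∑ j : Fin 2,
    ‖A.val i 0 * B.val j 1 - A.val i 1 * B.val j 0‖ ^ 2

noncomputable def nf (u1 u2 u3 u4 : ℂ) : ℝ :=
  (Complex.normSq u1 + Complex.normSq u2 + Complex.normSq u3 + Complex.normSq u4) / 2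



lemma nf_nonneg (u1 u2 u3 u4 : ℂ) : 0 ≤ nf u1 u2 u3 u4 := by
  have := Complex.normSq_nonneg u1
  have := Complex.normSq_nonneg u2
  have := Complex.normSq_nonneg u3
  have := Complex.normSq_nonneg u4
  unfold nf; linarith

lemma key_dot (u1 u2 u3 u4 v1 v2 v3 v4 : ℂ) :
    nf (u1*v1+u2*v3) (u1*v2+u2*v4) (u3*v1+u4*v3) (u3*v2+u4*v4)
      - nf u1 u2 u3 u4 * nf v1 v2 v3 v4 =
      (u1.re*u2.re + u1.im*u2.im + u3.re*u4.re + u3.im*u4.im) *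
        (v1.re*v3.re + v1.im*v3.im + v2.re*v4.re + v2.im*v4.im) +
      (u1.re*u2.im - u1.im*u2.re + u3.re*u4.im - u3.im*u4.re) *
        (v1.im*v3.re - v1.re*v3.im + v2.im*v4.re - v2.re*v4.im) +
      ((Complex.normSq u1 + Complex.normSq u3 - Complex.normSq u2 - Complex.normSq u4)/2) *
        ((Complex.normSq v1 + Complex.normSq v2 - Complex.normSq v3 - Complex.normSq v4)/2) := by
  unfold nf
  simp only [Complex.normSq_apply, Complex.add_re, Complex.add_im, Complex.mul_re, Complex.mul_im]
  ring

lemma key_sq (u1 u2 u3 u4 : ℂ) (hU : u1 * u4 - u2 * u3 = 1) :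
    (nf u1 u2 u3 u4) ^ 2 - 1 =
      (u1.re*u2.re + u1.im*u2.im + u3.re*u4.re + u3.im*u4.im)^2 +
      (u1.re*u2.im - u1.im*u2.re + u3.re*u4.im - u3.im*u4.re)^2 +
      ((Complex.normSq u1 + Complex.normSq u3 - Complex.normSq u2 - Complex.normSq u4)/2)^2 := by
  have h1 : u1.re * u4.re - u1.im * u4.im - (u2.re * u3.re - u2.im * u3.im) = 1 := by
    have := congrArg Complex.re hU; simpa [Complex.mul_re] using this
  have h2 : u1.re * u4.im + u1.im * u4.re - (u2.re * u3.im + u2.im * u3.re) = 0 := by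
    have := congrArg Complex.im hU; simpa [Complex.mul_im] using this
  unfold nf
  simp only [Complex.normSq_apply]
  nlinarith [h1, h2, sq_nonneg (1:ℝ)]

lemma key_sq' (v1 v2 v3 v4 : ℂ) (hV : v1 * v4 - v2 * v3 = 1) :
    (nf v1 v2 v3 v4) ^ 2 - 1 =
      (v1.re*v3.re + v1.im*v3.im + v2.re*v4.re + v2.im*v4.im)^2 +
      (v1.im*v3.re - v1.re*v3.im + v2.im*v4.re - v2.re*v4.im)^2 +
      ((Complex.normSq v1 + Complex.normSq v2 - Complex.normSq v3 - Complex.normSq v4)/2)^2 := by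
  have h1 : v1.re * v4.re - v1.im * v4.im - (v2.re * v3.re - v2.im * v3.im) = 1 := by
    have := congrArg Complex.re hV; simpa [Complex.mul_re] using this
  have h2 : v1.re * v4.im + v1.im * v4.re - (v2.re * v3.im + v2.im * v3.re) = 0 := by
    have := congrArg Complex.im hV; simpa [Complex.mul_im] using this
  unfold nf
  simp only [Complex.normSq_apply]
  nlinarith [h1, h2, sq_nonneg (1:ℝ)]

lemma real_key (x y z P1 P2 P3 Q1 Q2 Q3 : ℝ)
    (hU : x^2 - 1 = P1^2+P2^2+P3^2) (hV : z^2-1 = Q1^2+Q2^2+Q3^2)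
    (hdot : y - x*z = P1*Q1+P2*Q2+P3*Q3)
    (hx0 : 0 ≤ x) (hz0 : 0 ≤ z) :
    1 ≤ x ∧ 1 ≤ y ∧ 1 ≤ z ∧
    0 ≤ 1 + 2*x*y*z - x^2 - y^2 - z^2 := by
  have hx : 1 ≤ x := by nlinarith [sq_nonneg P1, sq_nonneg P2, sq_nonneg P3]
  have hz : 1 ≤ z := by nlinarith [sq_nonneg Q1, sq_nonneg Q2, sq_nonneg Q3]
  have hcs : (P1*Q1+P2*Q2+P3*Q3)^2 ≤ (P1^2+P2^2+P3^2)*(Q1^2+Q2^2+Q3^2) := by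
    nlinarith [sq_nonneg (P1*Q2-P2*Q1), sq_nonneg (P1*Q3-P3*Q1), sq_nonneg (P2*Q3-P3*Q2)]
  have hid : 1 + 2*x*y*z - x^2 - y^2 - z^2 =
      (P1^2+P2^2+P3^2)*(Q1^2+Q2^2+Q3^2) - (P1*Q1+P2*Q2+P3*Q3)^2 := by
    linear_combination (z^2-1)*hU + (P1^2+P2^2+P3^2)*hV
      - (y - x*z + (P1*Q1+P2*Q2+P3*Q3))*hdot
  have hdelta : 0 ≤ 1 + 2*x*y*z - x^2 - y^2 - z^2 := by rw [hid]; linarith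
  have hy : 1 ≤ y := by
    nlinarith [hdelta, sq_nonneg (x - z), mul_le_mul hx hz (by norm_num) (by linarith)]
  exact ⟨hx, hy, hz, hdelta⟩

lemma key (u1 u2 u3 u4 v1 v2 v3 v4 : ℂ) (hU : u1 * u4 - u2 * u3 = 1)
    (hV : v1 * v4 - v2 * v3 = 1) :
    1 ≤ nf u1 u2 u3 u4 ∧
    1 ≤ nf (u1*v1+u2*v3) (u1*v2+u2*v4) (u3*v1+u4*v3) (u3*v2+u4*v4) ∧
    1 ≤ nf v1 v2 v3 v4 ∧
    0 ≤ 1 + 2 * nf u1 u2 u3 u4 *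
        nf (u1*v1+u2*v3) (u1*v2+u2*v4) (u3*v1+u4*v3) (u3*v2+u4*v4) * nf v1 v2 v3 v4
      - (nf u1 u2 u3 u4)^2
      - (nf (u1*v1+u2*v3) (u1*v2+u2*v4) (u3*v1+u4*v3) (u3*v2+u4*v4))^2
      - (nf v1 v2 v3 v4)^2 := by
  obtain ⟨hx, hy, hz, hd⟩ := real_key (nf u1 u2 u3 u4)
    (nf (u1*v1+u2*v3) (u1*v2+u2*v4) (u3*v1+u4*v3) (u3*v2+u4*v4)) (nf v1 v2 v3 v4)
    _ _ _ _ _ _ (key_sq u1 u2 u3 u4 hU) (key_sq' v1 v2 v3 v4 hV)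
    (by linear_combination key_dot u1 u2 u3 u4 v1 v2 v3 v4)
    (nf_nonneg _ _ _ _) (nf_nonneg _ _ _ _)
  exact ⟨hx, hy, hz, hd⟩




lemma det_entries (A : Matrix.SpecialLinearGroup (Fin 2) ℂ) :
    A.val 0 0 * A.val 1 1 - A.val 0 1 * A.val 1 0 = 1 := by
  have := A.prop
  rw [Matrix.det_fin_two] at this
  linear_combination this

lemma sphPhi_eq_nf (A B : Matrix.SpecialLinearGroup (Fin 2) ℂ) :
    sphPhi A B = nf (A.val 0 0 * B.val 1 1 - A.val 0 1 * B.val 1 0)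
      (A.val 0 1 * B.val 0 0 - A.val 0 0 * B.val 0 1)
      (A.val 1 0 * B.val 1 1 - A.val 1 1 * B.val 1 0)
      (A.val 1 1 * B.val 0 0 - A.val 1 0 * B.val 0 1) := by
  have flip : ∀ a b : ℂ, Complex.normSq (a - b) = Complex.normSq (b - a) := by
    intro a b; rw [← Complex.normSq_neg, neg_sub]
  simp only [sphPhi, nf, Fin.sum_univ_two, Complex.sq_norm]
  rw [flip (A.val 0 0 * B.val 0 1), flip (A.val 1 0 * B.val 0 1)]
  ring

lemma sphPhi_det (A B : Matrix.SpecialLinearGroup (Fin 2) ℂ) :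
    (A.val 0 0 * B.val 1 1 - A.val 0 1 * B.val 1 0) *
      (A.val 1 1 * B.val 0 0 - A.val 1 0 * B.val 0 1) -
    (A.val 0 1 * B.val 0 0 - A.val 0 0 * B.val 0 1) *
      (A.val 1 0 * B.val 1 1 - A.val 1 1 * B.val 1 0) = 1 := by
  linear_combination (B.val 0 0 * B.val 1 1 - B.val 0 1 * B.val 1 0) * det_entries A +
    det_entries B

lemma sphPhi_comp (A B C : Matrix.SpecialLinearGroup (Fin 2) ℂ) :
    sphPhi A C = nf
      ((A.val 0 0 * B.val 1 1 - A.val 0 1 * B.val 1 0) * (B.val 0 0 * C.val 1 1 - B.val 0 1 * C.val 1 0)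
        + (A.val 0 1 * B.val 0 0 - A.val 0 0 * B.val 0 1) * (B.val 1 0 * C.val 1 1 - B.val 1 1 * C.val 1 0))
      ((A.val 0 0 * B.val 1 1 - A.val 0 1 * B.val 1 0) * (B.val 0 1 * C.val 0 0 - B.val 0 0 * C.val 0 1)
        + (A.val 0 1 * B.val 0 0 - A.val 0 0 * B.val 0 1) * (B.val 1 1 * C.val 0 0 - B.val 1 0 * C.val 0 1))
      ((A.val 1 0 * B.val 1 1 - A.val 1 1 * B.val 1 0) * (B.val 0 0 * C.val 1 1 - B.val 0 1 * C.val 1 0)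
        + (A.val 1 1 * B.val 0 0 - A.val 1 0 * B.val 0 1) * (B.val 1 0 * C.val 1 1 - B.val 1 1 * C.val 1 0))
      ((A.val 1 0 * B.val 1 1 - A.val 1 1 * B.val 1 0) * (B.val 0 1 * C.val 0 0 - B.val 0 0 * C.val 0 1)
        + (A.val 1 1 * B.val 0 0 - A.val 1 0 * B.val 0 1) * (B.val 1 1 * C.val 0 0 - B.val 1 0 * C.val 0 1)) := by
  rw [sphPhi_eq_nf A C]
  have hB := det_entries B
  congr 1
  · linear_combination (A.val 0 1 * C.val 1 0 - A.val 0 0 * C.val 1 1) * hB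
  · linear_combination (A.val 0 0 * C.val 0 1 - A.val 0 1 * C.val 0 0) * hB
  · linear_combination (A.val 1 1 * C.val 1 0 - A.val 1 0 * C.val 1 1) * hB
  · linear_combination (A.val 1 0 * C.val 0 1 - A.val 1 1 * C.val 0 0) * hB



noncomputable def lowT (c u : ℝ) (hc : c ≠ 0) : Matrix.SpecialLinearGroup (Fin 2) ℂ :=
  ⟨!![(c : ℂ), 0; (u : ℂ), (c : ℂ)⁻¹], by
    have hc' : (c : ℂ) ≠ 0 := Complex.ofReal_ne_zero.2 hc
    rw [Matrix.det_fin_two_of]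
    field_simp
    ring⟩

lemma sphPhi_one_lowT (c u : ℝ) (hc : c ≠ 0) :
    sphPhi 1 (lowT c u hc) = (c^2 + (c⁻¹)^2 + u^2) / 2 := by
  simp only [sphPhi, Fin.sum_univ_two, lowT, Matrix.SpecialLinearGroup.coe_one,
    Matrix.one_apply_eq, Matrix.one_apply_ne, Matrix.cons_val', Matrix.cons_val_zero,
    Matrix.cons_val_one, Matrix.head_cons, Matrix.head_fin_const, Matrix.empty_val',
    Matrix.cons_val_fin_one, Matrix.of_apply]
  norm_num [← Complex.ofReal_inv, Complex.norm_real, Real.norm_eq_abs, sq_abs, abs_inv]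
  ring

lemma sphPhi_lowT_lowT (b c u : ℝ) (hb : b ≠ 0) (hc : c ≠ 0) :
    sphPhi (lowT b 0 hb) (lowT c u hc) =
      (b^2 * (c⁻¹)^2 + (b⁻¹)^2 * c^2 + (b⁻¹)^2 * u^2) / 2 := by
  simp only [sphPhi, Fin.sum_univ_two, lowT, Matrix.cons_val', Matrix.cons_val_zero,
    Matrix.cons_val_one, Matrix.head_cons, Matrix.head_fin_const, Matrix.empty_val',
    Matrix.cons_val_fin_one, Matrix.of_apply]
  push_cast [← Complex.ofReal_inv]
  norm_num [← Complex.ofReal_mul, Complex.norm_real, Real.norm_eq_abs, abs_mul]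
  simp only [← abs_inv, ← abs_pow, ← abs_mul, sq_abs]
  rw [abs_of_nonneg (by positivity : (0:ℝ) ≤ (b * c⁻¹)^2),
    abs_of_nonneg (by positivity : (0:ℝ) ≤ (b⁻¹ * c)^2),
    abs_of_nonneg (by positivity : (0:ℝ) ≤ (b⁻¹ * u)^2)]
  field_simp
  ring


lemma construct_real (x y z : ℝ) (hx : 1 ≤ x) (hy : 1 ≤ y) (hz : 1 ≤ z)
    (hD : 0 ≤ 1 + 2*x*y*z - x^2 - y^2 - z^2) :
    ∃ (b c u : ℝ), b ≠ 0 ∧ c ≠ 0 ∧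
      (b^2 + (b⁻¹)^2 + (0:ℝ)^2)/2 = x ∧
      (c^2 + (c⁻¹)^2 + u^2)/2 = y ∧
      (b^2*(c⁻¹)^2 + (b⁻¹)^2*c^2 + (b⁻¹)^2*u^2)/2 = z := by
  rcases eq_or_lt_of_le hx with hx1 | hx1
  · -- x = 1 : then y = z
    have hyz : y = z := by nlinarith [sq_nonneg (y - z)]
    have hsy : (Real.sqrt (y^2-1))^2 = y^2 - 1 := Real.sq_sqrt (by nlinarith)
    set γ := y + Real.sqrt (y^2-1) with hγdef
    have hγ1 : 1 ≤ γ := by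
      have := Real.sqrt_nonneg (y^2-1)
      simp only [hγdef]; linarith
    have hγ0 : (0:ℝ) < γ := by linarith
    have hγ2 : γ^2 = 2*y*γ - 1 := by
      simp only [hγdef]; linear_combination hsy
    have hc2 : (Real.sqrt γ)^2 = γ := Real.sq_sqrt (le_of_lt hγ0)
    refine ⟨1, Real.sqrt γ, 0, one_ne_zero,
      ne_of_gt (Real.sqrt_pos.2 hγ0), ?_, ?_, ?_⟩
    · norm_num; linarith
    · rw [inv_pow, hc2]
      field_simp
      linear_combination hγ2
    · rw [inv_pow, hc2, ← hyz]
      field_simp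
      linear_combination y * hγ2 + (1 - y) * hsy
  · -- 1 < x
    have hs2 : (Real.sqrt (x^2-1))^2 = x^2 - 1 := Real.sq_sqrt (by nlinarith)
    set s := Real.sqrt (x^2-1) with hsdef
    have hs0 : 0 < s := Real.sqrt_pos.2 (by nlinarith)
    set β := x + s with hβdef
    have hβ1 : 1 < β := by simp only [hβdef]; linarith
    have hβ0 : (0:ℝ) < β := by linarith
    have hβ2 : β^2 = 2*x*β - 1 := by simp only [hβdef]; linear_combination hs2
    have hsβ : x*β - 1 = s*β := by simp only [hβdef]; linear_combination -hs2
    have hE : (z*β - y)^2 - 2*y*(z*β - y)*(x*β - 1) + (x*β - 1)^2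
        = (1 + 2*x*y*z - x^2 - y^2 - z^2) * (1 - 2*x*β) := by
      linear_combination (z^2 - 2*x*y*z + x^2 + y^2 - 1) * hβ2 + (1 - y^2) * hs2
    have hxβ : 1 < x*β := by nlinarith
    have hEneg : (z*β - y)^2 - 2*y*(z*β - y)*(x*β - 1) + (x*β - 1)^2 ≤ 0 := by
      rw [hE]; nlinarith
    have hnum : 0 < z*β - y := by
      by_contra h
      push_neg at h
      have h2 : 0 ≤ y*(y - z*β)*(x*β - 1) :=
        mul_nonneg (mul_nonneg (by linarith) (by linarith)) (by linarith)
      have h3 : 0 < (x*β - 1)*(x*β - 1) := mul_pos (by linarith) (by linarith)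
      nlinarith [hEneg, sq_nonneg (z*β - y), h2, h3]
    have hsβ0 : 0 < s*β := by positivity
    set w := (z*β - y)/(s*β) with hwdef
    have hw0 : 0 < w := div_pos hnum hsβ0
    have hwm : w*(s*β) = z*β - y := div_mul_cancel₀ _ (ne_of_gt hsβ0)
    have hwq : w^2 - 2*y*w + 1 ≤ 0 := by
      have h := div_nonpos_of_nonpos_of_nonneg hEneg (le_of_lt (mul_pos hsβ0 hsβ0))
      calc w^2 - 2*y*w + 1
          = ((z*β - y)^2 - 2*y*(z*β - y)*(x*β - 1) + (x*β - 1)^2)/((s*β)*(s*β)) := by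
            rw [hwdef, hsβ]; field_simp
        _ ≤ 0 := h
    have hu2 : 0 ≤ 2*y - w - w⁻¹ := by
      have hid : w * (2*y - w - w⁻¹) = -(w^2 - 2*y*w + 1) := by
        field_simp; ring
      nlinarith [hid]
    have hb2 : (Real.sqrt β)^2 = β := Real.sq_sqrt (le_of_lt hβ0)
    have hbinv : ((Real.sqrt β)⁻¹)^2 = 2*x - β := by
      rw [inv_pow, hb2]
      exact inv_eq_of_mul_eq_one_right (by linear_combination -hβ2)
    have hw2 : ((Real.sqrt w)⁻¹)^2 = w⁻¹ := by
      rw [inv_pow, Real.sq_sqrt (le_of_lt hw0)]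
    have hwinv : (((Real.sqrt w)⁻¹)⁻¹)^2 = w := by
      rw [inv_inv, Real.sq_sqrt (le_of_lt hw0)]
    have hu2' : (Real.sqrt (2*y - w - w⁻¹))^2 = 2*y - w - w⁻¹ := Real.sq_sqrt hu2
    refine ⟨Real.sqrt β, (Real.sqrt w)⁻¹, Real.sqrt (2*y - w - w⁻¹),
      ne_of_gt (Real.sqrt_pos.2 hβ0),
      inv_ne_zero (ne_of_gt (Real.sqrt_pos.2 hw0)), ?_, ?_, ?_⟩
    · rw [hb2, hbinv]; ring_nf
    · rw [hw2, hwinv, hu2']; ring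
    · rw [hb2, hbinv, hw2, hwinv, hu2']
      have key3 : (β*w + (2*x - β)*w⁻¹ + (2*x - β)*(2*y - w - w⁻¹))*β = (z*2)*β := by
        linear_combination 2*hwm - 2*y*hβ2
      have := mul_right_cancel₀ (ne_of_gt hβ0) key3
      linarith


/-- For `0 < t < 1`, the image of the spherical logarithm map
`(A, B, C) ↦ (log_t Φ(A,B), log_t Φ(A,C), log_t Φ(B,C))` on `SL₂(ℂ)³` is exactly
`{(log_t x, log_t y, log_t z) : x, y, z ≥ 1, 1 + 2xyz − x² − y² − z² ≥ 0}`. -/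
theorem stmt12 (t : ℝ) (ht0 : 0 < t) (ht1 : t < 1) :
    Set.range (fun p : Matrix.SpecialLinearGroup (Fin 2) ℂ ×
        Matrix.SpecialLinearGroup (Fin 2) ℂ × Matrix.SpecialLinearGroup (Fin 2) ℂ =>
      ((Real.logb t (sphPhi p.1 p.2.1), Real.logb t (sphPhi p.1 p.2.2),
        Real.logb t (sphPhi p.2.1 p.2.2)) : ℝ × ℝ × ℝ)) =
    {q : ℝ × ℝ × ℝ | ∃ x y z : ℝ, 1 ≤ x ∧ 1 ≤ y ∧ 1 ≤ z ∧
      0 ≤ 1 + 2 * x * y * z - x ^ 2 - y ^ 2 - z ^ 2 ∧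
      q = (Real.logb t x, Real.logb t y, Real.logb t z)} := by
  ext q
  simp only [Set.mem_range, Set.mem_setOf_eq]
  constructor
  · rintro ⟨⟨A, B, C⟩, rfl⟩
    obtain ⟨h1, h2, h3, h4⟩ := key _ _ _ _ _ _ _ _ (sphPhi_det A B) (sphPhi_det B C)
    refine ⟨sphPhi A B, sphPhi A C, sphPhi B C, ?_, ?_, ?_, ?_, rfl⟩
    · rw [sphPhi_eq_nf A B]; exact h1
    · rw [sphPhi_comp A B C]; exact h2
    · rw [sphPhi_eq_nf B C]; exact h3
    · rw [sphPhi_eq_nf A B, sphPhi_comp A B C, sphPhi_eq_nf B C]; exact h4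
  · rintro ⟨x, y, z, hx, hy, hz, hD, rfl⟩
    obtain ⟨b, c, u, hb, hc, e1, e2, e3⟩ := construct_real x y z hx hy hz hD
    refine ⟨⟨1, lowT b 0 hb, lowT c u hc⟩, ?_⟩
    simp only
    rw [sphPhi_one_lowT b 0 hb, sphPhi_one_lowT c u hc, sphPhi_lowT_lowT b c u hb hc,
      e1, e2, e3]
end

section
/- Let a, b, c be negative real numbers, and suppose there exists t₀ ∈ (0,1) such that for all t with 0 < t < t₀ one has 1 + 2·t^{a+b+c} − t^{2a} − t^{2b} − t^{2c} ≥ 0. Then b + c ≤ a, a + c ≤ b, and a + b ≤ c (equivalently, |a| ≤ |b| + |c|, |b| ≤ |a| + |c|, and |c| ≤ |a| + |b|). -/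
lemma stmt13_aux (a b c : ℝ) (habc : a + b + c ≤ 0)
    (t₀ : ℝ) (ht₀0 : 0 < t₀) (ht₀1 : t₀ < 1)
    (h : ∀ t : ℝ, 0 < t → t < t₀ →
      0 ≤ 1 + 2 * t ^ (a + b + c) - t ^ (2 * a) - t ^ (2 * b) - t ^ (2 * c)) :
    b + c ≤ a := by
  by_contra hlt
  push_neg at hlt
  set d : ℝ := a - b - c with hd
  have hdneg : d < 0 := by simp [hd]; linarith
  set u : ℝ := (3 : ℝ) ^ (1 / d) with hu
  have hupos : 0 < u := Real.rpow_pos_of_pos (by norm_num) _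
  set t : ℝ := min t₀ u / 2 with ht
  have ht0 : 0 < t := by positivity
  have htt₀ : t < t₀ := by
    have : min t₀ u ≤ t₀ := min_le_left _ _
    rw [ht]; linarith
  have htu : t < u := by
    have : min t₀ u ≤ u := min_le_right _ _
    rw [ht]; linarith
  have ht1 : t ≤ 1 := le_of_lt (htt₀.trans ht₀1)
  have hud : u ^ d = 3 := by
    rw [hu, ← Real.rpow_mul (by norm_num : (0:ℝ) ≤ 3), one_div_mul_cancel hdneg.ne,
      Real.rpow_one]
  have htd : 3 < t ^ d := by
    rw [← hud]; exact Real.rpow_lt_rpow_of_neg ht0 htu hdneg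
  have hX : 1 ≤ t ^ (a + b + c) :=
    Real.one_le_rpow_of_pos_of_le_one_of_nonpos ht0 ht1 habc
  have h2a : t ^ (2 * a) = t ^ (a + b + c) * t ^ d := by
    rw [← Real.rpow_add ht0, hd]; ring_nf
  have hb' : 0 < t ^ (2 * b) := Real.rpow_pos_of_pos ht0 _
  have hc' : 0 < t ^ (2 * c) := Real.rpow_pos_of_pos ht0 _
  have key := h t ht0 htt₀
  nlinarith [mul_le_mul_of_nonneg_left htd.le (by linarith : (0:ℝ) ≤ t ^ (a+b+c))]

/-- If `a, b, c < 0` and for all sufficiently small `t ∈ (0, 1)` one has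
`1 + 2 t^{a+b+c} − t^{2a} − t^{2b} − t^{2c} ≥ 0`, then `b + c ≤ a`, `a + c ≤ b`, `a + b ≤ c`. -/
theorem stmt13 (a b c : ℝ) (ha : a < 0) (hb : b < 0) (hc : c < 0)
    (t₀ : ℝ) (ht₀0 : 0 < t₀) (ht₀1 : t₀ < 1)
    (h : ∀ t : ℝ, 0 < t → t < t₀ →
      0 ≤ 1 + 2 * t ^ (a + b + c) - t ^ (2 * a) - t ^ (2 * b) - t ^ (2 * c)) :
    b + c ≤ a ∧ a + c ≤ b ∧ a + b ≤ c := by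
  have habc : a + b + c ≤ 0 := by linarith
  refine ⟨stmt13_aux a b c habc t₀ ht₀0 ht₀1 h, ?_, ?_⟩
  · refine stmt13_aux b a c (by linarith) t₀ ht₀0 ht₀1 (fun t ht ht' => ?_)
    have := h t ht ht'
    rw [show b + a + c = a + b + c by ring]
    linarith
  · refine stmt13_aux c a b (by linarith) t₀ ht₀0 ht₀1 (fun t ht ht' => ?_)
    have := h t ht ht'
    rw [show c + a + b = a + b + c by ring]
    linarith
end

section
/- Let n ≥ 2 and let t > 0 with t ≠ 1. For A ∈ SL_n(ℂ) and 1 ≤ i ≤ n−1, let φ_i(A) = ∑_I |p_{I,{1,…,i}}(A)|², where the sum runs over all i-element subsets I ⊆ {1,…,n} and p_{I,{1,…,i}}(A) is the determinant of the i × i submatrix of A with rows indexed by I and columns 1,…,i (the flag minors). Then the map SL_n(ℂ) → ℝ^{n−1} sending A to ( log_t φ₁(A), …, log_t φ_{n−1}(A) ) is surjective. -/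
/-- For `n ≥ 2`, `t > 0`, `t ≠ 1`, the spherical logarithm map
`A ↦ (log_t φ₁(A), …, log_t φ_{n−1}(A))` on `SL_n(ℂ)` is surjective onto `ℝ^{n−1}`, where
`φᵢ(A) = ∑_I |p_{I,{1,…,i}}(A)|²`, the sum of squared absolute values of the `i × i` flag
minors of `A` (rows `I`, columns `1, …, i`). -/
theorem stmt17 (n : ℕ) (hn : 2 ≤ n) (t : ℝ) (ht0 : 0 < t) (ht1 : t ≠ 1) :
    Function.Surjective (fun A : Matrix.SpecialLinearGroup (Fin n) ℂ =>
      (fun i : Fin (n - 1) =>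
        Real.logb t
          (∑ I ∈ ((Finset.univ : Finset (Fin n)).powersetCard ((i : ℕ) + 1)).attach,
            norm
              ((A.val.submatrix
                (I.1.orderEmbOfFin ((Finset.mem_powersetCard.mp I.2).2))
                (fun k : Fin ((i : ℕ) + 1) =>
                  Fin.castLE (by omega : (i : ℕ) + 1 ≤ n) k)).det) ^ 2) : Fin (n - 1) → ℝ)) := by
  intro c
  -- partial products
  set p : ℕ → ℝ := fun k => if h : 1 ≤ k ∧ k ≤ n - 1 then t ^ (c ⟨k - 1, by omega⟩ / 2) else 1
    with hpdef
  have hppos : ∀ k, 0 < p k := by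
    intro k
    simp only [hpdef]
    split
    · exact Real.rpow_pos_of_pos ht0 _
    · exact one_pos
  have hpne : ∀ k, p k ≠ 0 := fun k => (hppos k).ne'
  have hp0 : p 0 = 1 := by simp [hpdef]
  have hpn : p n = 1 := by
    simp only [hpdef]
    rw [dif_neg]
    omega
  set d : Fin n → ℂ := fun j => ((p ((j : ℕ) + 1) / p (j : ℕ) : ℝ) : ℂ) with hddef
  have htel : ∀ m : ℕ, ∏ j ∈ Finset.range m, (p (j + 1) / p j) = p m / p 0 := by
    intro m
    induction m with
    | zero => simp [div_self (hpne 0)]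
    | succ m ih =>
        rw [Finset.prod_range_succ, ih, div_mul_div_comm, mul_comm (p 0) (p m),
          mul_div_mul_left _ _ (hpne m)]
  have hdet : Matrix.det (Matrix.diagonal d) = 1 := by
    rw [Matrix.det_diagonal]
    have : ∏ j : Fin n, d j = (((∏ j ∈ Finset.range n, (p (j + 1) / p j)) : ℝ) : ℂ) := by
      rw [Complex.ofReal_prod, ← Fin.prod_univ_eq_prod_range]
    rw [this, htel, hp0, hpn]
    norm_num
  refine ⟨⟨Matrix.diagonal d, hdet⟩, ?_⟩
  funext i
  simp only
  have him : (i : ℕ) + 1 ≤ n := by omega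
  -- the "initial" subset
  set I₀ : Finset (Fin n) := Finset.univ.map (Fin.castLEEmb him) with hI₀def
  have hI₀mem : I₀ ∈ (Finset.univ : Finset (Fin n)).powersetCard ((i : ℕ) + 1) := by
    rw [Finset.mem_powersetCard]
    refine ⟨Finset.subset_univ _, ?_⟩
    simp [hI₀def]
  have hcastmem : ∀ k : Fin ((i : ℕ) + 1), Fin.castLE him k ∈ I₀ := by
    intro k
    simp [hI₀def]
  -- the sum reduces to the single term at I₀
  have hsum :
      (∑ I ∈ ((Finset.univ : Finset (Fin n)).powersetCard ((i : ℕ) + 1)).attach,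
        norm
          (((Matrix.diagonal d).submatrix
            (I.1.orderEmbOfFin ((Finset.mem_powersetCard.mp I.2).2))
            (fun k : Fin ((i : ℕ) + 1) => Fin.castLE him k)).det) ^ 2)
      = (p ((i : ℕ) + 1)) ^ 2 := by
    rw [Finset.sum_eq_single_of_mem (⟨I₀, hI₀mem⟩ :
        {x // x ∈ (Finset.univ : Finset (Fin n)).powersetCard ((i : ℕ) + 1)})
        (Finset.mem_attach _ _)]
    · -- the term at I₀
      have hcard : I₀.card = (i : ℕ) + 1 := (Finset.mem_powersetCard.mp hI₀mem).2
      have hemb : (fun k : Fin ((i : ℕ) + 1) => Fin.castLE him k) =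
          I₀.orderEmbOfFin hcard := by
        apply Finset.orderEmbOfFin_unique hcard hcastmem
        exact fun a b hab => hab
      have hsub : ((Matrix.diagonal d).submatrix
            (I₀.orderEmbOfFin hcard)
            (fun k : Fin ((i : ℕ) + 1) => Fin.castLE him k)) =
          Matrix.diagonal (fun k : Fin ((i : ℕ) + 1) => d (Fin.castLE him k)) := by
        ext k l
        rw [Matrix.submatrix_apply, ← hemb]
        by_cases hkl : k = l
        · subst hkl; simp [Matrix.diagonal_apply_eq]
        · rw [Matrix.diagonal_apply_ne _ (fun hh => hkl (Fin.castLE_injective him hh)),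
            Matrix.diagonal_apply_ne _ hkl]
      rw [hsub, Matrix.det_diagonal]
      have hprod : ∏ k : Fin ((i : ℕ) + 1), d (Fin.castLE him k)
          = ((p ((i : ℕ) + 1) : ℝ) : ℂ) := by
        have : ∏ k : Fin ((i : ℕ) + 1), d (Fin.castLE him k)
            = (((∏ j ∈ Finset.range ((i : ℕ) + 1), (p (j + 1) / p j)) : ℝ) : ℂ) := by
          rw [Complex.ofReal_prod, ← Fin.prod_univ_eq_prod_range]
          rfl
        rw [this, htel, hp0, div_one]
      rw [hprod, Complex.norm_real, Real.norm_eq_abs, abs_of_pos (hppos _)]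
    · -- all other terms vanish
      rintro ⟨I, hI⟩ - hne
      have hIne : I ≠ I₀ := fun hh => hne (by simpa using hh)
      have hIcard : I.card = (i : ℕ) + 1 := (Finset.mem_powersetCard.mp hI).2
      -- some column index missing from I
      have hmiss : ∃ l : Fin ((i : ℕ) + 1), Fin.castLE him l ∉ I := by
        by_contra hall
        push_neg at hall
        apply hIne
        apply Finset.eq_of_superset_of_card_ge _ (by
          rw [hIcard, (Finset.mem_powersetCard.mp hI₀mem).2])
        intro x hx
        simp only [hI₀def, Finset.mem_map, Finset.mem_univ, true_and] at hx
        obtain ⟨k, rfl⟩ := hx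
        exact hall k
      obtain ⟨l, hl⟩ := hmiss
      have : ((Matrix.diagonal d).submatrix
          (I.orderEmbOfFin hIcard)
          (fun k : Fin ((i : ℕ) + 1) => Fin.castLE him k)).det = 0 := by
        apply Matrix.det_eq_zero_of_column_eq_zero l
        intro k
        rw [Matrix.submatrix_apply, Matrix.diagonal_apply_ne]
        intro hh
        exact hl (hh ▸ Finset.orderEmbOfFin_mem I hIcard k)
      rw [this]
      simp
  rw [hsum]
  have hpm : p ((i : ℕ) + 1) = t ^ (c i / 2) := by
    simp only [hpdef]
    rw [dif_pos ⟨le_refl _ |>.trans (by omega), by omega⟩]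
    congr 1
  rw [hpm, ← Real.rpow_natCast (t ^ (c i / 2)) 2, ← Real.rpow_mul ht0.le]
  norm_num
  rw [Real.logb, Real.log_rpow ht0, mul_div_assoc, div_self (Real.log_ne_zero_of_pos_of_ne_one ht0 ht1), mul_one]
end
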